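/- Let (X_n) be a stochastic process on ℝ^d adapted to a filtration (F_n), and let f : ℝ^d → [0,∞) be bounded with f(x) → 0 as ‖x‖ → ∞ and inf_{‖x‖≤r} f(x) > 0 for every r. Suppose there exists r₀ such that E[f(X_{n+1}) − f(X_n) | F_n] ≤ 0 on {‖X_n‖ ≥ r₀} for all n. If almost surely limsup_n ‖X_n‖ = ∞, then almost surely lim_n ‖X_n‖ = ∞. -/

import Mathlib

set_option maxHeartbeats 1000000

open MeasureTheory Filter

lemma aux_key {Ω : Type*} {m0 : MeasurableSpace Ω} {μ : Measure Ω} [IsProbabilityMeasure μ]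
    {d : ℕ} (X : ℕ → Ω → EuclideanSpace ℝ (Fin d)) (ℱ : Filtration ℕ m0)
    (hadapted : Adapted ℱ X)
    (f : EuclideanSpace ℝ (Fin d) → ℝ) (hf0 : ∀ x, 0 ≤ f x) (hfmeas : Measurable f)
    {K : ℝ} (hK : ∀ x, f x ≤ K)
    {r₀ : ℝ}
    (hdrift : ∀ n, ∀ᵐ ω ∂μ, r₀ ≤ ‖X n ω‖ →
        (μ[fun ω' => f (X (n + 1) ω') - f (X n ω') | ℱ n]) ω ≤ 0)
    {R' ε c : ℝ} (hR' : r₀ ≤ R') (hε : 0 < ε) (hc : 0 ≤ c)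
    (hεf : ∀ x, ‖x‖ ≤ R' → ε ≤ f x)
    (j : ℕ) (G : Set Ω) (hGm : MeasurableSet[ℱ j] G)
    (hGf : ∀ ω ∈ G, f (X j ω) ≤ ε * c) :
    μ (G ∩ {ω | ∃ n, j ≤ n ∧ ‖X n ω‖ ≤ R'}) ≤ ENNReal.ofReal c * μ G := by
  classical
  have hXm : ∀ i, Measurable (X i) := fun i => (hadapted i).mono (ℱ.le i) le_rfl
  have hXFn : ∀ i n, i ≤ n → Measurable[ℱ n] (X i) :=
    fun i n h => (hadapted i).mono (ℱ.mono h) le_rfl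
  have hex : ∀ (n : ℕ) (ω : Ω), ∃ i, ((j ≤ i ∧ ‖X i ω‖ ≤ R') ∨ i = n) :=
    fun n ω => ⟨n, Or.inr rfl⟩
  set T : ℕ → Ω → ℕ := fun n ω => Nat.find (hex n ω) with hT
  set Y : ℕ → Ω → ℝ := fun n ω => f (X (T n ω) ω) with hY
  have hTle : ∀ n ω, T n ω ≤ n := fun n ω => Nat.find_le (Or.inr rfl)
  -- no-hit characterization
  have hTnohit : ∀ n ω, (∀ i, j ≤ i → i ≤ n → R' < ‖X i ω‖) → T n ω = n := by
    intro n ω h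
    rw [hT, Nat.find_eq_iff]
    refine ⟨Or.inr rfl, fun k hk => ?_⟩
    rintro (⟨hjk, hkR⟩ | rfl)
    · exact absurd hkR (not_le.2 (h k hjk hk.le))
    · exact lt_irrefl _ hk
  have hTnohit' : ∀ n ω, (∀ i, j ≤ i → i ≤ n → R' < ‖X i ω‖) → T (n + 1) ω = n + 1 := by
    intro n ω h
    rw [hT, Nat.find_eq_iff]
    refine ⟨Or.inr rfl, fun k hk => ?_⟩
    rintro (⟨hjk, hkR⟩ | rfl)
    · exact absurd hkR (not_le.2 (h k hjk (Nat.lt_succ_iff.mp hk)))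
    · exact lt_irrefl _ hk
  -- hit characterization
  have hThit : ∀ n ω, (∃ i, j ≤ i ∧ i ≤ n ∧ ‖X i ω‖ ≤ R') →
      j ≤ T n ω ∧ ‖X (T n ω) ω‖ ≤ R' := by
    intro n ω ⟨i, hji, hin, hiR⟩
    have hfind_le : T n ω ≤ i := Nat.find_le (Or.inl ⟨hji, hiR⟩)
    rcases Nat.find_spec (hex n ω) with h | h
    · exact h
    · have : i = n := le_antisymm hin (h ▸ hfind_le)
      subst this
      have hTi : T i ω = i := h
      rw [hTi]
      exact ⟨hji, hiR⟩
  have hThit' : ∀ n ω, (∃ i, j ≤ i ∧ i ≤ n ∧ ‖X i ω‖ ≤ R') → T (n + 1) ω = T n ω := by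
    intro n ω hh
    obtain ⟨h1, h2⟩ := hThit n ω hh
    rw [hT, Nat.find_eq_iff]
    constructor
    · exact Or.inl ⟨h1, h2⟩
    · intro k hk
      rintro (⟨hjk, hkR⟩ | rfl)
      · exact Nat.find_min (hex n ω) hk (Or.inl ⟨hjk, hkR⟩)
      · exact absurd hk (not_lt.2 (le_trans (hTle n ω) (Nat.le_succ n)))
  -- measurability helpers
  have hnorm : ∀ i, Measurable fun ω => ‖X i ω‖ := fun i => (hXm i).norm
  have hp : ∀ (k n : ℕ), MeasurableSet {ω : Ω | ((j ≤ k ∧ ‖X k ω‖ ≤ R') ∨ k = n)} := by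
    intro k n
    by_cases h1 : k = n
    · simp [h1]
    · by_cases h2 : j ≤ k
      · simpa [h1, h2] using measurableSet_le (hnorm k) measurable_const
      · simp [h1, h2]
  have hfiber : ∀ n i, MeasurableSet {ω | T n ω = i} := by
    intro n i
    have heq : {ω | T n ω = i} =
        {ω : Ω | ((j ≤ i ∧ ‖X i ω‖ ≤ R') ∨ i = n)} ∩
          ⋂ k, ⋂ _ : k < i, {ω : Ω | ((j ≤ k ∧ ‖X k ω‖ ≤ R') ∨ k = n)}ᶜ := by
      ext ω
      simp only [hT, Set.mem_setOf_eq, Nat.find_eq_iff, Set.mem_inter_iff, Set.mem_iInter,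
        Set.mem_compl_iff]
    rw [heq]
    exact (hp i n).inter (MeasurableSet.iInter fun k => MeasurableSet.iInter fun _ =>
      (hp k n).compl)
  have hYmeas : ∀ n, Measurable (Y n) := by
    intro n
    have heq : Y n = fun ω => ∑ i ∈ Finset.range (n+1),
        Set.indicator {ω' | T n ω' = i} (fun ω' => f (X i ω')) ω := by
      funext ω
      rw [Finset.sum_eq_single_of_mem (T n ω) (by simp [Nat.lt_succ_iff, hTle n ω])]
      · rw [Set.indicator_of_mem (by exact rfl : ω ∈ {ω' | T n ω' = T n ω})]
      · intro i _ hne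
        exact Set.indicator_of_notMem
          (fun (h : ω ∈ {ω' | T n ω' = i}) => hne (Eq.symm h)) (fun ω' => f (X i ω'))
    rw [heq]
    exact Finset.measurable_sum _ fun i _ =>
      (hfmeas.comp (hXm i)).indicator (hfiber n i)
  -- integrability
  have hintf : ∀ g : Ω → ℝ, Measurable g → (∀ ω, 0 ≤ g ω) → (∀ ω, g ω ≤ K) →
      Integrable g μ := by
    intro g hm h0 hb
    exact (integrable_const K).mono' hm.aestronglyMeasurable
      (ae_of_all _ fun ω => by rw [Real.norm_eq_abs, abs_of_nonneg (h0 ω)]; exact hb ω)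
  have hYint : ∀ n, Integrable (Y n) μ :=
    fun n => hintf _ (hYmeas n) (fun ω => hf0 _) (fun ω => hK _)
  have hXint : ∀ n, Integrable (fun ω => f (X n ω)) μ :=
    fun n => hintf _ (hfmeas.comp (hXm n)) (fun ω => hf0 _) (fun ω => hK _)
  have hGm0 : MeasurableSet G := (ℱ.le j) _ hGm
  -- the no-hit set
  set N : ℕ → Set Ω := fun n => {ω | ∀ i, j ≤ i → i ≤ n → R' < ‖X i ω‖} with hNdef
  have hNmeas : ∀ n, MeasurableSet[ℱ n] (N n) := by
    intro n
    have heq : N n = ⋂ i, ⋂ _ : j ≤ i, ⋂ _ : i ≤ n, {ω | R' < ‖X i ω‖} := by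
      ext ω; simp [hNdef]
    rw [heq]
    refine MeasurableSet.iInter fun i => MeasurableSet.iInter fun _ =>
      MeasurableSet.iInter fun hin => ?_
    exact (hXFn i n hin) (measurableSet_lt measurable_const measurable_norm)
  -- decomposition of Y (n+1)
  have hsplit : ∀ n, j ≤ n → ∀ ω, Y (n+1) ω = Y n ω +
      Set.indicator (N n) (fun ω => f (X (n+1) ω) - f (X n ω)) ω := by
    intro n hjn ω
    by_cases h : ω ∈ N n
    · rw [Set.indicator_of_mem h]
      have h1 : T n ω = n := hTnohit n ω h
      have h2 : T (n+1) ω = n+1 := hTnohit' n ω h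
      simp only [hY, h1, h2]
      ring
    · rw [Set.indicator_of_notMem h, add_zero]
      have hhit : ∃ i, j ≤ i ∧ i ≤ n ∧ ‖X i ω‖ ≤ R' := by
        by_contra hcon
        push_neg at hcon
        exact h hcon
      simp only [hY, hThit' n ω hhit]
  -- one-step decrease of the integral
  have hstep : ∀ n, j ≤ n → ∫ ω in G, Y (n+1) ω ∂μ ≤ ∫ ω in G, Y n ω ∂μ := by
    intro n hjn
    have hGN : MeasurableSet[ℱ n] (G ∩ N n) := ((ℱ.mono hjn) _ hGm).inter (hNmeas n)
    have hGNm0 : MeasurableSet (G ∩ N n) := (ℱ.le n) _ hGN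
    have hNm0 : MeasurableSet (N n) := (ℱ.le n) _ (hNmeas n)
    have hdiffint : Integrable (fun ω => f (X (n+1) ω) - f (X n ω)) μ :=
      (hXint (n+1)).sub (hXint n)
    have h1 : ∫ ω in G, Y (n+1) ω ∂μ
        = ∫ ω in G, Y n ω ∂μ + ∫ ω in G ∩ N n, (f (X (n+1) ω) - f (X n ω)) ∂μ := by
      rw [← setIntegral_indicator hNm0]
      rw [← integral_add ((hYint n).integrableOn) ((hdiffint.indicator hNm0).integrableOn)]
      exact integral_congr_ae (ae_of_all _ fun ω => hsplit n hjn ω)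
    have h2 : ∫ ω in G ∩ N n, (f (X (n+1) ω) - f (X n ω)) ∂μ
        = ∫ ω in G ∩ N n, (μ[fun ω' => f (X (n + 1) ω') - f (X n ω') | ℱ n]) ω ∂μ :=
      (setIntegral_condExp (ℱ.le n) hdiffint hGN).symm
    have h3 : ∫ ω in G ∩ N n, (μ[fun ω' => f (X (n + 1) ω') - f (X n ω') | ℱ n]) ω ∂μ ≤ 0 := by
      apply setIntegral_nonpos_ae hGNm0
      filter_upwards [hdrift n] with ω hω hmem
      exact hω (le_trans hR' (hmem.2 n hjn le_rfl).le)
    linarith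
  -- iterated decrease
  have hchain : ∀ n, j ≤ n → ∫ ω in G, Y n ω ∂μ ≤ ∫ ω in G, Y j ω ∂μ := by
    intro n hjn
    induction n, hjn using Nat.le_induction with
    | base => exact le_rfl
    | succ n hjn ih => exact (hstep n hjn).trans ih
  -- value at time j
  have hYj : ∀ ω, Y j ω = f (X j ω) := by
    intro ω
    have hTj : T j ω = j := by
      rw [hT, Nat.find_eq_iff]
      refine ⟨Or.inr rfl, fun k hk hp' => ?_⟩
      rcases hp' with ⟨hjk, _⟩ | rfl
      · omega
      · omega
    simp only [hY, hTj]
  have hupper : ∫ ω in G, Y j ω ∂μ ≤ ε * c * (μ G).toReal := by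
    calc ∫ ω in G, Y j ω ∂μ ≤ ∫ _ in G, ε * c ∂μ := by
          refine setIntegral_mono_on ((hYint j).integrableOn)
            ((integrable_const _).integrableOn) hGm0 fun ω hω => ?_
          rw [hYj ω]; exact hGf ω hω
      _ = ε * c * (μ G).toReal := by rw [setIntegral_const, smul_eq_mul, measureReal_def]; ring
  -- hit sets
  set Hit : ℕ → Set Ω := fun n => {ω | ∃ i, j ≤ i ∧ i ≤ n ∧ ‖X i ω‖ ≤ R'} with hHitdef
  have hHitmeas : ∀ n, MeasurableSet (Hit n) := by
    intro n
    have heq : Hit n = ⋃ i, ⋃ _ : j ≤ i, ⋃ _ : i ≤ n, {ω | ‖X i ω‖ ≤ R'} := by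
      ext ω; simp only [hHitdef, Set.mem_setOf_eq, Set.mem_iUnion]; tauto
    rw [heq]
    exact MeasurableSet.iUnion fun i => MeasurableSet.iUnion fun _ =>
      MeasurableSet.iUnion fun _ => measurableSet_le (hnorm i) measurable_const
  have hlow : ∀ n, ε * (μ (G ∩ Hit n)).toReal ≤ ∫ ω in G, Y n ω ∂μ := by
    intro n
    have hsub : G ∩ Hit n ⊆ G := Set.inter_subset_left
    calc ε * (μ (G ∩ Hit n)).toReal = ∫ _ in G ∩ Hit n, ε ∂μ := by
          rw [setIntegral_const, smul_eq_mul, measureReal_def]; ring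
      _ ≤ ∫ ω in G ∩ Hit n, Y n ω ∂μ := by
          refine setIntegral_mono_on ((integrable_const _).integrableOn)
            ((hYint n).integrableOn) (hGm0.inter (hHitmeas n)) fun ω hω => ?_
          exact hεf _ (hThit n ω hω.2).2
      _ ≤ ∫ ω in G, Y n ω ∂μ :=
          setIntegral_mono_set ((hYint n).integrableOn)
            (ae_of_all _ fun ω => hf0 _) (HasSubset.Subset.eventuallyLE hsub)
  have hmain : ∀ n, (μ (G ∩ Hit n)).toReal ≤ c * (μ G).toReal := by
    intro n
    by_cases hjn : j ≤ n
    · have h := (hlow n).trans ((hchain n hjn).trans hupper)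
      nlinarith [ENNReal.toReal_nonneg (a := μ (G ∩ Hit n))]
    · have hemp : G ∩ Hit n = ∅ := by
        ext ω
        simp only [hHitdef, Set.mem_inter_iff, Set.mem_setOf_eq, Set.mem_empty_iff_false,
          iff_false, not_and]
        rintro _ ⟨i, h2, h3, _⟩
        omega
      rw [hemp]
      simp only [measure_empty, ENNReal.toReal_zero]
      exact mul_nonneg hc ENNReal.toReal_nonneg
  -- pass to the union
  have hmono : Monotone fun n => G ∩ Hit n := by
    rintro a b hab ω ⟨h1, i, h2, h3, h4⟩
    exact ⟨h1, i, h2, h3.trans hab, h4⟩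
  have hunion : G ∩ {ω | ∃ n, j ≤ n ∧ ‖X n ω‖ ≤ R'} = ⋃ n, (G ∩ Hit n) := by
    ext ω
    simp only [Set.mem_inter_iff, Set.mem_iUnion, Set.mem_setOf_eq, hHitdef]
    constructor
    · rintro ⟨h1, n, h2, h3⟩
      exact ⟨n, h1, n, h2, le_rfl, h3⟩
    · rintro ⟨n, h1, i, h2, h3, h4⟩
      exact ⟨h1, i, h2, h4⟩
  rw [hunion, Directed.measure_iUnion hmono.directed_le]
  refine iSup_le fun n => ?_
  have hle : μ (G ∩ Hit n) ≤ ENNReal.ofReal (c * (μ G).toReal) := by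
    rw [← ENNReal.ofReal_toReal (measure_ne_top μ (G ∩ Hit n))]
    exact ENNReal.ofReal_le_ofReal (hmain n)
  refine hle.trans ?_
  rw [ENNReal.ofReal_mul hc, ENNReal.ofReal_toReal (measure_ne_top μ G)]

theorem stmt_14 {Ω : Type*} {m0 : MeasurableSpace Ω} {μ : Measure Ω} [IsProbabilityMeasure μ]
    {d : ℕ} (X : ℕ → Ω → EuclideanSpace ℝ (Fin d)) (ℱ : Filtration ℕ m0)
    (hadapted : Adapted ℱ X)
    (f : EuclideanSpace ℝ (Fin d) → ℝ) (hf0 : ∀ x, 0 ≤ f x) (hfmeas : Measurable f)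
    (hfbdd : ∃ K : ℝ, ∀ x, f x ≤ K)
    (hftend : Tendsto f (Bornology.cobounded (EuclideanSpace ℝ (Fin d))) (nhds 0))
    (hfpos : ∀ r : ℝ, ∃ ε > 0, ∀ x, ‖x‖ ≤ r → ε ≤ f x)
    (r₀ : ℝ)
    (hdrift : ∀ n, ∀ᵐ ω ∂μ,
        r₀ ≤ ‖X n ω‖ →
          (μ[fun ω' => f (X (n + 1) ω') - f (X n ω') | ℱ n]) ω ≤ 0)
    (hlimsup : ∀ᵐ ω ∂μ, Filter.limsup (fun n => (‖X n ω‖ : EReal)) atTop = ⊤) :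
    ∀ᵐ ω ∂μ, Tendsto (fun n => ‖X n ω‖) atTop atTop := by
  classical
  obtain ⟨K, hK⟩ := hfbdd
  have hBnull : ∀ k : ℕ, μ {ω | Filter.limsup (fun n => (‖X n ω‖ : EReal)) atTop = ⊤ ∧
      ∀ m : ℕ, ∃ n, m ≤ n ∧ ‖X n ω‖ ≤ (k : ℝ)} = 0 := by
    intro k
    set R' : ℝ := max r₀ k with hR'def
    obtain ⟨ε, hε, hεf⟩ := hfpos R'
    set B := {ω | Filter.limsup (fun n => (‖X n ω‖ : EReal)) atTop = ⊤ ∧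
      ∀ m : ℕ, ∃ n, m ≤ n ∧ ‖X n ω‖ ≤ (k : ℝ)} with hBdef
    have key : ∀ δ : NNReal, 0 < δ → μ B ≤ (δ : ENNReal) := by
      intro δ hδ
      have hpos : (0 : ℝ) < ε * δ := mul_pos hε (by exact_mod_cast hδ)
      have hev : ∀ᶠ x in Bornology.cobounded (EuclideanSpace ℝ (Fin d)), f x < ε * δ :=
        hftend.eventually_lt_const hpos
      rw [← comap_norm_atTop, eventually_comap] at hev
      obtain ⟨R, hR⟩ := eventually_atTop.mp hev
      set R₁ : ℝ := max R (R' + 1) with hR₁def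
      have hfsmall : ∀ x : EuclideanSpace ℝ (Fin d), R₁ ≤ ‖x‖ → f x ≤ ε * δ :=
        fun x hx => (hR ‖x‖ (le_trans (le_max_left _ _) hx) x rfl).le
      set G : ℕ → Set Ω := fun j' => {ω | R₁ ≤ ‖X j' ω‖ ∧ ∀ i < j', ‖X i ω‖ < R₁} with hGdef
      have hGmeas : ∀ j', MeasurableSet[ℱ j'] (G j') := by
        intro j'
        have heq : G j' = ({ω | R₁ ≤ ‖X j' ω‖} ∩
            ⋂ i, ⋂ _ : i < j', {ω | ‖X i ω‖ < R₁}) := by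
          ext ω; simp [hGdef]
        rw [heq]
        refine MeasurableSet.inter ?_
          (MeasurableSet.iInter fun i => MeasurableSet.iInter fun hi => ?_)
        · exact (hadapted j') (measurableSet_le measurable_const measurable_norm)
        · exact ((hadapted i).mono (ℱ.mono hi.le) le_rfl)
            (measurableSet_lt measurable_norm measurable_const)
      have hdisj : Pairwise (Function.onFun Disjoint G) := by
        have hgen : ∀ a b : ℕ, a < b → Disjoint (G a) (G b) := by
          intro a b hlt
          rw [Set.disjoint_left]
          rintro ω ⟨ha1, _⟩ ⟨_, hb2⟩
          exact absurd ha1 (not_le.2 (hb2 a hlt))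
        intro a b hab
        rcases lt_or_gt_of_ne hab with h | h
        · exact hgen a b h
        · exact (hgen b a h).symm
      have hsub : B ⊆ ⋃ j', (G j' ∩ {ω | ∃ n, j' ≤ n ∧ ‖X n ω‖ ≤ R'}) := by
        rintro ω ⟨htop, hret⟩
        have hexist : ∃ j', R₁ ≤ ‖X j' ω‖ := by
          by_contra hcon
          push_neg at hcon
          have hle : Filter.limsup (fun n => (‖X n ω‖ : EReal)) atTop ≤ (R₁ : EReal) :=
            Filter.limsup_le_of_le (by isBoundedDefault)
              (Filter.Eventually.of_forall fun n => by exact_mod_cast (hcon n).le)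
          rw [htop] at hle
          exact absurd hle (not_le.2 (EReal.coe_lt_top R₁))
        refine Set.mem_iUnion.2 ⟨Nat.find hexist, ⟨⟨Nat.find_spec hexist,
          fun i hi => not_le.1 (Nat.find_min hexist hi)⟩, ?_⟩⟩
        obtain ⟨n, hn1, hn2⟩ := hret (Nat.find hexist)
        exact ⟨n, hn1, hn2.trans (le_max_right r₀ (k : ℝ))⟩
      have hkey : ∀ j', μ (G j' ∩ {ω | ∃ n, j' ≤ n ∧ ‖X n ω‖ ≤ R'})
          ≤ ENNReal.ofReal (δ : ℝ) * μ (G j') := by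
        intro j'
        refine aux_key X ℱ hadapted f hf0 hfmeas hK hdrift (le_max_left r₀ (k : ℝ)) hε
          (by positivity) hεf j' (G j') (hGmeas j') fun ω hω => hfsmall (X j' ω) hω.1
      calc μ B ≤ μ (⋃ j', (G j' ∩ {ω | ∃ n, j' ≤ n ∧ ‖X n ω‖ ≤ R'})) := measure_mono hsub
        _ ≤ ∑' j', μ (G j' ∩ {ω | ∃ n, j' ≤ n ∧ ‖X n ω‖ ≤ R'}) := measure_iUnion_le _
        _ ≤ ∑' j', ENNReal.ofReal (δ : ℝ) * μ (G j') := ENNReal.tsum_le_tsum hkey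
        _ = ENNReal.ofReal (δ : ℝ) * ∑' j', μ (G j') := ENNReal.tsum_mul_left
        _ = ENNReal.ofReal (δ : ℝ) * μ (⋃ j', G j') := by
            rw [measure_iUnion hdisj (fun j' => (ℱ.le j') _ (hGmeas j'))]
        _ ≤ ENNReal.ofReal (δ : ℝ) * 1 := by gcongr; exact prob_le_one
        _ = (δ : ENNReal) := by rw [mul_one, ENNReal.ofReal_coe_nnreal]
    have hle0 : μ B ≤ 0 :=
      ENNReal.le_of_forall_pos_le_add fun δ hδ _ => by simpa using key δ hδ
    exact le_antisymm hle0 zero_le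
  have hae : ∀ᵐ ω ∂μ, ∀ k : ℕ, ¬(Filter.limsup (fun n => (‖X n ω‖ : EReal)) atTop = ⊤ ∧
      ∀ m : ℕ, ∃ n, m ≤ n ∧ ‖X n ω‖ ≤ (k : ℝ)) := by
    rw [ae_all_iff]
    intro k
    rw [ae_iff]
    simpa using hBnull k
  filter_upwards [hlimsup, hae] with ω htop hk
  rw [tendsto_atTop]
  intro b
  obtain ⟨k, hbk⟩ := exists_nat_ge b
  have h1 := hk k
  rw [not_and] at h1
  have h2 := h1 htop
  push_neg at h2
  obtain ⟨m, hm⟩ := h2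
  rw [eventually_atTop]
  exact ⟨m, fun n hn => hbk.trans (hm n hn).le⟩
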